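/- arXiv:1610.07396 — 6 statements merged into one kernel-verified Lean document; each statement's English description precedes it below -/
import Mathlib

section
/- The function d : C(M) × C(M) → ℝ defined by d(A,B) = ∫₀^∞ e^{-R} d_R(A,B) dR is a metric on C(M), and the topology it induces on C(M) coincides with the Chabauty topology. -/
open Metric Filter Set Topology

/-- The space of closed subsets of `M`. -/
abbrev ClosedSubsets (M : Type*) [MetricSpace M] := {A : Set M // IsClosed A}

/-- The truncated Hausdorff pseudo-distance `d_R(A,B) = min {1, d_Haus(A_R, B_R)}`,
where `A_R = A ∩ closedBall p R`, with the convention that the Hausdorff distance between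
the empty set and a nonempty set is `+∞` (so the truncation gives `1`), and between two
empty sets is `0`. -/
noncomputable def dR {M : Type*} [MetricSpace M] (p : M) (R : ℝ) (A B : Set M) : ℝ :=
  (min 1 (EMetric.hausdorffEdist (A ∩ closedBall p R) (B ∩ closedBall p R))).toReal

/-- `d(A,B) = ∫₀^∞ e^{-R} d_R(A,B) dR`. -/
noncomputable def dChab {M : Type*} [MetricSpace M] (p : M) (A B : Set M) : ℝ :=
  ∫ R in Ioi (0 : ℝ), Real.exp (-R) * dR p R A B

/-- The Chabauty topology on the space of closed subsets of `M`, generated by the sets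
`{C | C ∩ K = ∅}` for `K` compact and `{C | C ∩ U ≠ ∅}` for `U` open. -/
def Chabauty (M : Type*) [MetricSpace M] : TopologicalSpace (ClosedSubsets M) :=
  TopologicalSpace.generateFrom
    ({S | ∃ K : Set M, IsCompact K ∧ S = {C : ClosedSubsets M | C.1 ∩ K = ∅}} ∪
     {S | ∃ U : Set M, IsOpen U ∧ S = {C : ClosedSubsets M | (C.1 ∩ U).Nonempty}})

open ENNReal MeasureTheory

set_option linter.unusedSectionVars false
set_option linter.unusedVariables false

section basic
variable {M : Type*} [MetricSpace M] (p : M) (R : ℝ) (A B C : Set M)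

lemma min1_ne_top (x : ℝ≥0∞) : min 1 x ≠ ⊤ :=
  ne_top_of_le_ne_top one_ne_top (min_le_left _ _)

lemma min1_add (x y : ℝ≥0∞) : min 1 (x + y) ≤ min 1 x + min 1 y := by
  rcases le_or_gt 1 x with h | h
  · calc min 1 (x + y) ≤ 1 := min_le_left _ _
      _ = min 1 x := by rw [min_eq_left h]
      _ ≤ _ := le_add_right le_rfl
  rcases le_or_gt 1 y with h' | h'
  · calc min 1 (x + y) ≤ 1 := min_le_left _ _
      _ = min 1 y := by rw [min_eq_left h']
      _ ≤ _ := le_add_left le_rfl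
  · calc min 1 (x + y) ≤ x + y := min_le_right _ _
      _ ≤ min 1 x + min 1 y := by
          rw [min_eq_right h.le, min_eq_right h'.le]

lemma dR_nonneg : 0 ≤ dR p R A B := ENNReal.toReal_nonneg

lemma dR_le_one : dR p R A B ≤ 1 := by
  have := ENNReal.toReal_mono one_ne_top (min_le_left 1
    (EMetric.hausdorffEdist (A ∩ closedBall p R) (B ∩ closedBall p R)))
  simpa [dR] using this

lemma dR_self : dR p R A A = 0 := by
  simp [dR, EMetric.hausdorffEdist, hausdorffEDist_self]

lemma dR_comm : dR p R A B = dR p R B A := by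
  rw [dR, dR, EMetric.hausdorffEdist, hausdorffEDist_comm]

lemma min1_triangle (s t u : Set M) :
    min 1 (EMetric.hausdorffEdist s u) ≤
      min 1 (EMetric.hausdorffEdist s t) + min 1 (EMetric.hausdorffEdist t u) :=
  le_trans (min_le_min le_rfl (EMetric.hausdorffEdist_triangle (t := t))) (min1_add _ _)

lemma dR_triangle : dR p R A C ≤ dR p R A B + dR p R B C := by
  rw [dR, dR, dR, ← ENNReal.toReal_add (min1_ne_top _) (min1_ne_top _)]
  exact ENNReal.toReal_mono (by simp [min1_ne_top]) (min1_triangle _ _ _)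

end basic

section rightcont
variable {M : Type*} [MetricSpace M] [ProperSpace M] (p : M)

/-- Right continuity of truncation in Hausdorff edistance. -/
lemma trunc_rightCont {A : Set M} (hA : IsClosed A) (r₀ : ℝ) {ε : ℝ} (hε : 0 < ε) :
    ∃ η > 0, ∀ r, r₀ ≤ r → r ≤ r₀ + η →
      EMetric.hausdorffEdist (A ∩ closedBall p r) (A ∩ closedBall p r₀) ≤ ENNReal.ofReal ε := by
  set T := thickening ε (A ∩ closedBall p r₀) with hT
  have key : ∃ n : ℕ, A ∩ closedBall p (r₀ + 1 / (n + 1)) ⊆ T := by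
    by_contra h
    push_neg at h
    set t : ℕ → Set M := fun n => (A ∩ closedBall p (r₀ + 1 / (n + 1))) \ T with ht
    have htcl : ∀ n, IsClosed (t n) := fun n =>
      ((hA.inter Metric.isClosed_closedBall).sdiff isOpen_thickening)
    have h0 : (⋂ n, t n).Nonempty := by
      apply IsCompact.nonempty_iInter_of_sequence_nonempty_isCompact_isClosed t
      · intro n
        apply diff_subset_diff_left
        apply inter_subset_inter_right
        apply closedBall_subset_closedBall
        have h1 : (0:ℝ) < (n:ℝ) + 1 := by positivity
        have : (1 : ℝ) / ((n:ℝ) + 1 + 1) ≤ 1 / ((n:ℝ) + 1) :=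
          one_div_le_one_div_of_le h1 (by linarith)
        push_cast
        linarith
      · intro n
        obtain ⟨x, hx1, hx2⟩ := not_subset.1 (h n)
        exact ⟨x, hx1, hx2⟩
      · apply (isCompact_closedBall p (r₀ + 1 / ((0:ℕ) + 1))).of_isClosed_subset (htcl 0)
        exact (diff_subset.trans inter_subset_right)
      · exact htcl
    obtain ⟨x, hx⟩ := h0
    simp only [mem_iInter, ht, mem_diff, mem_inter_iff] at hx
    have hx0 : x ∈ A ∩ closedBall p r₀ := by
      refine ⟨(hx 0).1.1, ?_⟩
      simp only [mem_closedBall] at *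
      have : ∀ n : ℕ, dist x p ≤ r₀ + 1 / (n + 1) := fun n => (hx n).1.2
      by_contra hcon
      push_neg at hcon
      obtain ⟨n, hn⟩ := exists_nat_one_div_lt (show 0 < dist x p - r₀ by linarith)
      have := this n
      linarith
    exact (hx 0).2 (self_subset_thickening hε _ hx0)
  obtain ⟨n, hn⟩ := key
  refine ⟨1 / (n + 1), by positivity, fun r h1 h2 => ?_⟩
  apply EMetric.hausdorffEdist_le_of_mem_edist
  · intro x hx
    have hxT : x ∈ T := hn ⟨hx.1, closedBall_subset_closedBall (by linarith) hx.2⟩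
    rw [hT, mem_thickening_iff] at hxT
    obtain ⟨z, hz, hdz⟩ := hxT
    exact ⟨z, hz, by rw [edist_dist]; exact ENNReal.ofReal_le_ofReal hdz.le⟩
  · intro x hx
    refine ⟨x, ⟨hx.1, closedBall_subset_closedBall h1 hx.2⟩, by simp⟩

end rightcont

section meas
variable {M : Type*} [MetricSpace M] [ProperSpace M] (p : M)

lemma dR_rightCont {A B : Set M} (hA : IsClosed A) (hB : IsClosed B) (r₀ : ℝ) :
    Tendsto (fun r => dR p r A B) (𝓝[Ici r₀] r₀) (𝓝 (dR p r₀ A B)) := by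
  rw [Metric.tendsto_nhds]
  intro ε hε
  obtain ⟨ηA, hηA, hA'⟩ := trunc_rightCont p hA r₀ (show 0 < ε / 4 by linarith)
  obtain ⟨ηB, hηB, hB'⟩ := trunc_rightCont p hB r₀ (show 0 < ε / 4 by linarith)
  have hm : Ico r₀ (r₀ + min ηA ηB) ∈ 𝓝[Ici r₀] r₀ :=
    Ico_mem_nhdsGE_of_mem ⟨le_rfl, by simp [lt_min_iff, hηA, hηB]⟩
  filter_upwards [hm] with r hr
  set c := ENNReal.ofReal (ε / 4) with hc
  have e1 : min 1 (EMetric.hausdorffEdist (A ∩ closedBall p r) (A ∩ closedBall p r₀)) ≤ c :=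
    le_trans (min_le_right _ _) (hA' r hr.1 (by have := hr.2; have := min_le_left ηA ηB; linarith))
  have e2 : min 1 (EMetric.hausdorffEdist (B ∩ closedBall p r) (B ∩ closedBall p r₀)) ≤ c :=
    le_trans (min_le_right _ _) (hB' r hr.1 (by have := hr.2; have := min_le_right ηA ηB; linarith))
  set X := min 1 (EMetric.hausdorffEdist (A ∩ closedBall p r) (B ∩ closedBall p r)) with hX
  set Y := min 1 (EMetric.hausdorffEdist (A ∩ closedBall p r₀) (B ∩ closedBall p r₀)) with hY
  have t1 : X ≤ Y + c + c := by
    calc X ≤ min 1 (EMetric.hausdorffEdist (A ∩ closedBall p r) (A ∩ closedBall p r₀))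
          + min 1 (EMetric.hausdorffEdist (A ∩ closedBall p r₀) (B ∩ closedBall p r)) :=
        min1_triangle _ _ _
      _ ≤ c + (min 1 (EMetric.hausdorffEdist (A ∩ closedBall p r₀) (B ∩ closedBall p r₀))
          + min 1 (EMetric.hausdorffEdist (B ∩ closedBall p r₀) (B ∩ closedBall p r))) :=
        add_le_add e1 (min1_triangle _ _ _)
      _ ≤ c + (Y + c) := by
        refine add_le_add le_rfl (add_le_add le_rfl ?_)
        rw [EMetric.hausdorffEdist, hausdorffEDist_comm]; exact e2
      _ = Y + c + c := by ring
  have t2 : Y ≤ X + c + c := by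
    calc Y ≤ min 1 (EMetric.hausdorffEdist (A ∩ closedBall p r₀) (A ∩ closedBall p r))
          + min 1 (EMetric.hausdorffEdist (A ∩ closedBall p r) (B ∩ closedBall p r₀)) :=
        min1_triangle _ _ _
      _ ≤ c + (X + min 1 (EMetric.hausdorffEdist (B ∩ closedBall p r) (B ∩ closedBall p r₀))) := by
        refine add_le_add ?_ (min1_triangle _ _ _)
        rw [EMetric.hausdorffEdist, hausdorffEDist_comm]; exact e1
      _ ≤ c + (X + c) := add_le_add le_rfl (add_le_add le_rfl e2)
      _ = X + c + c := by ring
  have hcr : c.toReal = ε / 4 := ENNReal.toReal_ofReal (by linarith)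
  have fX : X ≠ ⊤ := min1_ne_top _
  have fY : Y ≠ ⊤ := min1_ne_top _
  have fc : c ≠ ⊤ := ENNReal.ofReal_ne_top
  have r1 : X.toReal ≤ Y.toReal + ε / 4 + ε / 4 := by
    have := ENNReal.toReal_mono (by finiteness) t1
    rwa [ENNReal.toReal_add (by finiteness) fc, ENNReal.toReal_add fY fc, hcr] at this
  have r2 : Y.toReal ≤ X.toReal + ε / 4 + ε / 4 := by
    have := ENNReal.toReal_mono (by finiteness) t2
    rwa [ENNReal.toReal_add (by finiteness) fc, ENNReal.toReal_add fX fc, hcr] at this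
  have : dR p r A B = X.toReal := rfl
  rw [Real.dist_eq, abs_sub_lt_iff]
  constructor <;> · show _ - _ < ε; simp only [dR]; linarith

lemma measurable_of_rightCont {f : ℝ → ℝ} (hf : ∀ x, Tendsto f (𝓝[Ici x] x) (𝓝 (f x))) :
    Measurable f := by
  have main : ∀ n : ℕ, Measurable (fun x : ℝ => f ((⌈x * 2 ^ n⌉ : ℤ) / 2 ^ n)) := by
    intro n
    have : (fun x : ℝ => f ((⌈x * 2 ^ n⌉ : ℤ) / 2 ^ n)) =
        (fun k : ℤ => f ((k : ℝ) / 2 ^ n)) ∘ (fun x : ℝ => ⌈x * 2 ^ n⌉) := rfl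
    rw [this]
    exact (measurable_of_countable _).comp (Int.measurable_ceil.comp (measurable_id.mul_const _))
  apply measurable_of_tendsto_metrizable main
  rw [tendsto_pi_nhds]
  intro x
  have hg : Tendsto (fun n : ℕ => ((⌈x * 2 ^ n⌉ : ℤ) : ℝ) / 2 ^ n) atTop (𝓝[Ici x] x) := by
    apply tendsto_nhdsWithin_of_tendsto_nhds_of_eventually_within
    · apply tendsto_of_tendsto_of_tendsto_of_le_of_le (g := fun _ => x)
        (h := fun n : ℕ => x + ((2 : ℝ)⁻¹) ^ n)
      · exact tendsto_const_nhds
      · have : Tendsto (fun n : ℕ => ((2 : ℝ)⁻¹) ^ n) atTop (𝓝 0) := by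
          apply _root_.tendsto_pow_atTop_nhds_zero_of_lt_one <;> norm_num
        simpa using tendsto_const_nhds.add this
      · intro n
        rw [le_div_iff₀ (by positivity)]
        exact Int.le_ceil _
      · intro n
        rw [div_le_iff₀ (by positivity)]
        simp only [inv_pow]
        have := (Int.ceil_lt_add_one (x * 2 ^ n)).le
        have h2 : (0:ℝ) < 2 ^ n := by positivity
        calc ((⌈x * 2 ^ n⌉ : ℤ) : ℝ) ≤ x * 2 ^ n + 1 := this
          _ = (x + ((2:ℝ) ^ n)⁻¹) * 2 ^ n := by field_simp
    · filter_upwards with n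
      rw [mem_Ici, le_div_iff₀ (by positivity)]
      exact Int.le_ceil _
  exact (hf x).comp hg

lemma measurable_dR {A B : Set M} (hA : IsClosed A) (hB : IsClosed B) :
    Measurable (fun r => dR p r A B) :=
  measurable_of_rightCont (fun r₀ => dR_rightCont p hA hB r₀)



end meas

section dchab
variable {M : Type*} [MetricSpace M] [ProperSpace M] (p : M)
variable {A B C : Set M}

lemma integrable_kernel (hA : IsClosed A) (hB : IsClosed B) :
    IntegrableOn (fun r => Real.exp (-r) * dR p r A B) (Ioi 0) := by
  have h1 : IntegrableOn (fun r : ℝ => Real.exp (-1 * r)) (Ioi 0) :=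
    exp_neg_integrableOn_Ioi 0 one_pos
  apply Integrable.mono h1
  · exact ((Real.measurable_exp.comp measurable_neg).mul
      (measurable_dR p hA hB)).aestronglyMeasurable
  · filter_upwards with r
    rw [Real.norm_eq_abs, Real.norm_eq_abs, abs_mul, abs_of_pos (Real.exp_pos _),
      abs_of_nonneg (dR_nonneg p r A B), abs_of_pos (Real.exp_pos _), neg_one_mul]
    nth_rewrite 2 [← mul_one (Real.exp (-r))]
    exact mul_le_mul_of_nonneg_left (dR_le_one p r A B) (Real.exp_pos _).le

lemma dChab_nonneg : 0 ≤ dChab p A B := by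
  apply integral_nonneg
  intro r
  exact mul_nonneg (Real.exp_pos _).le (dR_nonneg p r A B)

lemma dChab_self : dChab p A A = 0 := by
  have : ∀ r : ℝ, Real.exp (-r) * dR p r A A = 0 := by
    intro r
    simp [dR, EMetric.hausdorffEdist, hausdorffEDist_self]
  simp only [dChab, this, integral_zero]

lemma dChab_comm : dChab p A B = dChab p B A := by
  simp only [dChab, dR_comm p _ A B]

lemma dChab_triangle (hA : IsClosed A) (hB : IsClosed B) (hC : IsClosed C) :
    dChab p A C ≤ dChab p A B + dChab p B C := by
  rw [dChab, dChab, dChab, ← integral_add (integrable_kernel p hA hB)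
    (integrable_kernel p hB hC)]
  apply integral_mono_of_nonneg
  · filter_upwards with r
    exact mul_nonneg (Real.exp_pos _).le (dR_nonneg p r A C)
  · exact (integrable_kernel p hA hB).add (integrable_kernel p hB hC)
  · filter_upwards with r
    show Real.exp (-r) * dR p r A C ≤ _
    rw [← mul_add]
    exact mul_le_mul_of_nonneg_left (dR_triangle p r A B C) (Real.exp_pos _).le

/-- Key pointwise lower bound on `dR`. -/
lemma dR_lower {x : M} {ε r : ℝ} (hx : x ∈ A) (hpx : dist p x ≤ r) (hε : 0 < ε) (hε1 : ε ≤ 1)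
    (hB' : ∀ b ∈ B, ε ≤ dist x b) : ε ≤ dR p r A B := by
  have hxr : x ∈ A ∩ closedBall p r := ⟨hx, by rwa [mem_closedBall, dist_comm]⟩
  have h1 : ENNReal.ofReal ε ≤ EMetric.infEdist x (B ∩ closedBall p r) := by
    apply le_iInf₂
    intro y hy
    rw [edist_dist]
    exact ENNReal.ofReal_le_ofReal (hB' y hy.1)
  have h2 : ENNReal.ofReal ε ≤
      EMetric.hausdorffEdist (A ∩ closedBall p r) (B ∩ closedBall p r) :=
    h1.trans (EMetric.infEdist_le_hausdorffEdist_of_mem hxr)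
  have h3 : ENNReal.ofReal ε ≤ min 1
      (EMetric.hausdorffEdist (A ∩ closedBall p r) (B ∩ closedBall p r)) :=
    le_min (by simpa using ENNReal.ofReal_le_one.2 hε1) h2
  calc ε = (ENNReal.ofReal ε).toReal := (ENNReal.toReal_ofReal hε.le).symm
    _ ≤ _ := ENNReal.toReal_mono (min1_ne_top _) h3

/-- Key lower bound on `dChab`. -/
lemma dChab_lower (hA : IsClosed A) (hB : IsClosed B) {x : M} {ε R₀ : ℝ}
    (hx : x ∈ A) (hR₀ : 0 ≤ R₀) (hpx : dist p x ≤ R₀) (hε : 0 < ε) (hε1 : ε ≤ 1)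
    (hB' : ∀ b ∈ B, ε ≤ dist x b) : ε * Real.exp (-R₀) ≤ dChab p A B := by
  have key : ∀ r, R₀ < r → ε ≤ dR p r A B := fun r hr =>
    dR_lower p hx (hpx.trans hr.le) hε hε1 hB'
  have hint : ∫ r in Ioi (0:ℝ), (Ioi R₀).indicator (fun r => ε * Real.exp (-r)) r =
      ε * Real.exp (-R₀) := by
    rw [integral_indicator measurableSet_Ioi, Measure.restrict_restrict measurableSet_Ioi,
      Ioi_inter_Ioi, max_eq_left hR₀, MeasureTheory.integral_const_mul, integral_exp_neg_Ioi]
  rw [dChab, ← hint]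
  apply integral_mono_of_nonneg
  · filter_upwards with r
    apply indicator_nonneg
    intro r _
    exact mul_nonneg hε.le (Real.exp_pos _).le
  · exact integrable_kernel p hA hB
  · filter_upwards with r
    rcases le_or_gt r R₀ with h | h
    · rw [indicator_of_notMem (by simpa using h)]
      exact mul_nonneg (Real.exp_pos _).le (dR_nonneg p r A B)
    · rw [indicator_of_mem (by simpa using h), mul_comm ε]
      exact mul_le_mul_of_nonneg_left (key r h) (Real.exp_pos _).le

end dchab

/-- The set of "bad radii" is covered by boundedly many intervals of length `3δ`. -/
lemma bad_cover {M : Type*} [MetricSpace M] (p : M) (A : Set M)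
    {ε' δ Rb : ℝ} (hδ : 0 < δ) (hε' : 0 < ε') (D : Finset M)
    (hD : closedBall p Rb ⊆ ⋃ y ∈ D, ball y (ε' / 2)) :
    ∃ I : Finset ℕ, I.card ≤ 2 * D.card ∧
      {r : ℝ | 0 < r ∧ r ≤ Rb ∧ ∃ a ∈ A, dist p a ≤ r ∧
        ∀ a' ∈ A, dist p a' ≤ r - 3 * δ → ε' < dist a a'} ⊆
      ⋃ k ∈ I, Ico (3 * δ * k) (3 * δ * k + 3 * δ) := by
  classical
  have hne : Nonempty M := ⟨p⟩
  set Bad : Set ℝ := {r | 0 < r ∧ r ≤ Rb ∧ ∃ a ∈ A, dist p a ≤ r ∧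
    ∀ a' ∈ A, dist p a' ≤ r - 3 * δ → ε' < dist a a'} with hBadDef
  set m : ℕ := ⌊Rb / (3 * δ)⌋₊ + 1 with hmdef
  set I : Finset ℕ := (Finset.range m).filter
    (fun k => (Bad ∩ Ico (3 * δ * k) (3 * δ * k + 3 * δ)).Nonempty) with hIdef
  have h3δ : (0:ℝ) < 3 * δ := by linarith
  refine ⟨I, ?_, ?_⟩
  · -- card bound
    have hWit : ∀ k, k ∈ I → ∃ c, c ∈ D ∧ ∃ r, r ∈ Bad ∧ 3 * δ * k ≤ r ∧ r < 3 * δ * k + 3 * δ ∧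
        ∃ a, a ∈ A ∧ dist p a ≤ r ∧ (∀ a' ∈ A, dist p a' ≤ r - 3 * δ → ε' < dist a a') ∧
        dist a c < ε' / 2 := by
      intro k hk
      obtain ⟨r, hrBad, hrk⟩ := (Finset.mem_filter.1 hk).2
      have hrBad' := hrBad
      obtain ⟨hr0, hrRb, a, haA, hpa, hsep⟩ := hrBad'
      have haball : a ∈ closedBall p Rb := by
        rw [mem_closedBall, dist_comm]
        exact hpa.trans hrRb
      obtain ⟨c, hcD, hac⟩ := mem_iUnion₂.1 (hD haball)
      exact ⟨c, hcD, r, hrBad, hrk.1, hrk.2, a, haA, hpa, hsep, mem_ball.1 hac⟩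
    choose! c hcD r hrBad hr1 hr2 a haA hpa hsep hac using hWit
    have hsep2 : ∀ k ∈ I, ∀ k' ∈ I, k + 2 ≤ k' → c k ≠ c k' := by
      intro k hk k' hk' hkk' heq
      have h1 : r k < 3 * δ * k + 3 * δ := hr2 k hk
      have h2 : 3 * δ * k' ≤ r k' := hr1 k' hk'
      have hcast : (k:ℝ) + 2 ≤ (k':ℝ) := by exact_mod_cast hkk'
      have hmul := mul_le_mul_of_nonneg_left hcast h3δ.le
      have hord : dist p (a k) ≤ r k' - 3 * δ := by
        have := hpa k hk
        nlinarith
      have hlt : ε' < dist (a k') (a k) := hsep k' hk' (a k) (haA k hk) hord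
      have tri : dist (a k') (a k) ≤ dist (a k') (c k) + dist (c k) (a k) := dist_triangle _ _ _
      have e1 : dist (a k') (c k) < ε' / 2 := by rw [heq]; exact hac k' hk'
      have e2 : dist (c k) (a k) < ε' / 2 := by rw [dist_comm]; exact hac k hk
      linarith
    have hinj : ∀ (J : Finset ℕ), J ⊆ I →
        (∀ x ∈ J, ∀ y ∈ J, x ≠ y → x + 2 ≤ y ∨ y + 2 ≤ x) → J.card ≤ D.card := by
      intro J hJ hsep3
      apply Finset.card_le_card_of_injOn c (fun k hk => hcD k (hJ hk))
      intro k hk k' hk' heq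
      by_contra hne'
      rcases hsep3 k hk k' hk' hne' with h | h
      · exact hsep2 k (hJ hk) k' (hJ hk') h heq
      · exact hsep2 k' (hJ hk') k (hJ hk) h heq.symm
    have hcard := (Finset.card_filter_add_card_filter_not
      (s := I) (p := fun k => k % 2 = 0)).symm
    have hev : (I.filter (fun k => k % 2 = 0)).card ≤ D.card := by
      apply hinj _ (Finset.filter_subset _ _)
      intro x hx y hy hxy
      have hx2 := (Finset.mem_filter.1 hx).2
      have hy2 := (Finset.mem_filter.1 hy).2
      omega
    have hodd : (I.filter (fun k => ¬(k % 2 = 0))).card ≤ D.card := by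
      apply hinj _ (Finset.filter_subset _ _)
      intro x hx y hy hxy
      have hx2 := (Finset.mem_filter.1 hx).2
      have hy2 := (Finset.mem_filter.1 hy).2
      omega
    omega
  · -- coverage
    intro x hx
    have hxcopy := hx
    obtain ⟨hx0, hxRb, -⟩ := hxcopy
    set k : ℕ := ⌊x / (3 * δ)⌋₊ with hkdef
    have hk1 : 3 * δ * k ≤ x := by
      have := Nat.floor_le (show 0 ≤ x / (3 * δ) by positivity)
      calc 3 * δ * k ≤ 3 * δ * (x / (3 * δ)) := by
            apply mul_le_mul_of_nonneg_left this h3δ.le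
        _ = x := by field_simp
    have hk2 : x < 3 * δ * k + 3 * δ := by
      have := Nat.lt_floor_add_one (x / (3 * δ))
      have h := (div_lt_iff₀ h3δ).1 this
      calc x < ((k:ℝ) + 1) * (3 * δ) := h
        _ = 3 * δ * k + 3 * δ := by ring
    have hkm : k < m := by
      have hdiv : x / (3 * δ) ≤ Rb / (3 * δ) := by gcongr
      have : k ≤ ⌊Rb / (3 * δ)⌋₊ := Nat.floor_le_floor hdiv
      omega
    apply mem_iUnion₂.2
    refine ⟨k, ?_, hk1, hk2⟩
    rw [hIdef, Finset.mem_filter]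
    exact ⟨Finset.mem_range.2 hkm, ⟨x, hx, hk1, hk2⟩⟩

section nbhd
variable {M : Type*} [MetricSpace M] [ProperSpace M] (p : M)

/-- Integrability and value of the indicator-exponential auxiliary integrals. -/
lemma aux_ind_exp {R₀ : ℝ} (hR₀ : 0 ≤ R₀) (c : ℝ) :
    Integrable ((Ioi R₀).indicator (fun r => c * Real.exp (-r))) (volume.restrict (Ioi 0)) ∧
    ∫ r in Ioi 0, (Ioi R₀).indicator (fun r => c * Real.exp (-r)) r = c * Real.exp (-R₀) := by
  have hfun : (fun r : ℝ => c * Real.exp (-r)) = fun r => c * Real.exp (-1 * r) := by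
    funext r; rw [neg_one_mul]
  have hint : IntegrableOn (fun r => c * Real.exp (-r)) (Ioi R₀)
      (volume.restrict (Ioi 0)) := by
    rw [IntegrableOn, Measure.restrict_restrict measurableSet_Ioi, Ioi_inter_Ioi,
      max_eq_left hR₀, hfun]
    exact (exp_neg_integrableOn_Ioi R₀ one_pos).const_mul c
  constructor
  · exact (integrable_indicator_iff measurableSet_Ioi).2 hint
  · rw [integral_indicator measurableSet_Ioi, Measure.restrict_restrict measurableSet_Ioi,
      Ioi_inter_Ioi, max_eq_left hR₀, MeasureTheory.integral_const_mul, integral_exp_neg_Ioi]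

/-- Integral of the indicator of an interval. -/
lemma aux_ind_Ico (a b : ℝ) (hab : a ≤ b) :
    Integrable ((Ico a b).indicator (fun _ => (1:ℝ))) (volume.restrict (Ioi 0)) ∧
    ∫ r in Ioi 0, (Ico a b).indicator (fun _ => (1:ℝ)) r ≤ b - a := by
  have hint : IntegrableOn (fun _ : ℝ => (1:ℝ)) (Ico a b) (volume.restrict (Ioi 0)) := by
    refine integrableOn_const (ne_of_lt ?_)
    calc (volume.restrict (Ioi 0)) (Ico a b) ≤ volume (Ico a b) :=
          Measure.restrict_apply_le _ _
      _ < ⊤ := by rw [Real.volume_Ico]; exact ofReal_lt_top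
  constructor
  · exact (integrable_indicator_iff measurableSet_Ico).2 hint
  · rw [integral_indicator measurableSet_Ico, setIntegral_const, smul_eq_mul, mul_one]
    calc ((volume.restrict (Ioi 0)) (Ico a b)).toReal ≤ (volume (Ico a b)).toReal := by
          apply ENNReal.toReal_mono _ (Measure.restrict_apply_le _ _)
          rw [Real.volume_Ico]; exact ofReal_ne_top
      _ = b - a := by rw [Real.volume_Ico, ENNReal.toReal_ofReal (by linarith)]

/-- The main neighbourhood lemma: every `dChab`-ball contains a "Chabauty data" neighbourhood. -/
lemma chab_nbhd {A : Set M} (hA : IsClosed A) {ε : ℝ} (hε : 0 < ε) :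
    ∃ (K : Set M) (F : Finset M), IsCompact K ∧ A ∩ K = ∅ ∧ (∀ c ∈ F, c ∈ A) ∧
      ∃ δ > 0, ∀ B : Set M, IsClosed B → B ∩ K = ∅ →
        (∀ c ∈ F, (B ∩ ball c δ).Nonempty) → dChab p A B < ε := by
  -- parameters
  set ε' : ℝ := ε / 8 with hε'def
  have hε' : 0 < ε' := by positivity
  set R : ℝ := max 1 (Real.log (8 / ε)) with hRdef
  have hR1 : (1:ℝ) ≤ R := le_max_left _ _
  have hR0 : (0:ℝ) ≤ R := by linarith
  have hRexp : Real.exp (-R) ≤ ε / 8 := by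
    have h8 : (0:ℝ) < 8 / ε := by positivity
    calc Real.exp (-R) ≤ Real.exp (-Real.log (8 / ε)) := by
          apply Real.exp_le_exp.2; simp only [neg_le_neg_iff]; exact le_max_right _ _
      _ = ε / 8 := by
          rw [Real.exp_neg, Real.exp_log h8]; field_simp
  -- the net D of closedBall p (R+1)
  obtain ⟨D0, hD0sub, hD0fin, hD0cov⟩ :=
    finite_cover_balls_of_compact (isCompact_closedBall p (R + 1)) (show 0 < ε' / 2 by positivity)
  set D : Finset M := hD0fin.toFinset with hDdef
  have hDcov : closedBall p (R + 1) ⊆ ⋃ y ∈ D, ball y (ε' / 2) := by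
    intro x hx
    obtain ⟨y, hy, hxy⟩ := mem_iUnion₂.1 (hD0cov hx)
    exact mem_iUnion₂.2 ⟨y, hD0fin.mem_toFinset.2 hy, hxy⟩
  set N₀ : ℕ := D.card with hN₀def
  -- δ
  set δ : ℝ := min (1/2) (ε / (8 * (10 * N₀ + 2))) with hδdef
  have hδpos : 0 < δ := by
    apply lt_min (by norm_num)
    positivity
  have hδhalf : δ ≤ 1/2 := min_le_left _ _
  have hδsmall : (10 * N₀ + 2) * δ ≤ ε / 8 := by
    have h1 : δ ≤ ε / (8 * (10 * N₀ + 2)) := min_le_right _ _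
    have h2 : (0:ℝ) < 10 * N₀ + 2 := by positivity
    calc (10 * (N₀:ℝ) + 2) * δ ≤ (10 * N₀ + 2) * (ε / (8 * (10 * N₀ + 2))) := by
          exact mul_le_mul_of_nonneg_left h1 h2.le
      _ = ε / 8 := by field_simp
  -- the compact set K and the finite cover F
  set K : Set M := closedBall p (R + 2) \ thickening δ A with hKdef
  have hKcompact : IsCompact K := (isCompact_closedBall p (R + 2)).diff isOpen_thickening
  have hAK : A ∩ K = ∅ := by
    rw [eq_empty_iff_forall_notMem]
    rintro x ⟨hxA, _, hxT⟩
    exact hxT (self_subset_thickening hδpos A hxA)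
  obtain ⟨F0, hF0sub, hF0fin, hF0cov⟩ :=
    finite_cover_balls_of_compact ((isCompact_closedBall p (R + 2)).inter_left hA) hδpos
  set F : Finset M := hF0fin.toFinset with hFdef
  have hFsub : ∀ c ∈ F, c ∈ A := fun c hc => (hF0sub (hF0fin.mem_toFinset.1 hc)).1
  refine ⟨K, F, hKcompact, hAK, hFsub, δ, hδpos, ?_⟩
  intro B hB hBK hBF
  -- properties P1 and P2
  have hP1 : ∀ b ∈ B, dist p b ≤ R + 2 → ∃ a ∈ A, dist b a < δ := by
    intro b hb hpb
    have : b ∉ K := fun hK' => (eq_empty_iff_forall_notMem.1 hBK b) ⟨hb, hK'⟩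
    rw [hKdef, mem_diff, not_and_or] at this
    rcases this with h | h
    · exact absurd (by rwa [mem_closedBall, dist_comm]) h
    · rw [not_not, mem_thickening_iff] at h
      exact h
  have hP2 : ∀ a ∈ A, dist p a ≤ R + 2 → ∃ b ∈ B, dist a b < 2 * δ := by
    intro a ha hpa
    have haF : a ∈ ⋃ c ∈ F0, ball c δ := hF0cov ⟨ha, by rwa [mem_closedBall, dist_comm]⟩
    obtain ⟨c, hc, hac⟩ := mem_iUnion₂.1 haF
    obtain ⟨b, hbB, hbc⟩ := hBF c (hF0fin.mem_toFinset.2 hc)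
    refine ⟨b, hbB, ?_⟩
    rw [mem_ball] at hac
    rw [mem_ball] at hbc
    calc dist a b ≤ dist a c + dist c b := dist_triangle _ _ _
      _ < δ + δ := add_lt_add hac (by rwa [dist_comm] at hbc)
      _ = 2 * δ := by ring
  -- the set of bad radii
  set Bad : Set ℝ := {r | 0 < r ∧ r ≤ R + 1 ∧ ∃ a ∈ A, dist p a ≤ r ∧
    ∀ a' ∈ A, dist p a' ≤ r - 3 * δ → ε' < dist a a'} with hBadDef
  -- the good estimate
  have hgood : ∀ r : ℝ, 0 < r → r ≤ R → r ∉ Bad → r + 2 * δ ∉ Bad →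
      dR p r A B ≤ ε' + 2 * δ := by
    intro r hr0 hrR hrg hrg'
    have hbound : EMetric.hausdorffEdist (A ∩ closedBall p r) (B ∩ closedBall p r) ≤
        ENNReal.ofReal (ε' + 2 * δ) := by
      apply EMetric.hausdorffEdist_le_of_mem_edist
      · -- direction A → B
        rintro x ⟨hxA, hxball⟩
        have hpx : dist p x ≤ r := by rwa [mem_closedBall, dist_comm] at hxball
        have : ¬ (0 < r ∧ r ≤ R + 1 ∧ ∃ a ∈ A, dist p a ≤ r ∧
            ∀ a' ∈ A, dist p a' ≤ r - 3 * δ → ε' < dist a a') := hrg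
        push_neg at this
        obtain ⟨a', ha'A, ha'r, ha'x⟩ := this hr0 (by linarith) x hxA hpx
        obtain ⟨b, hbB, hab⟩ := hP2 a' ha'A (by linarith)
        refine ⟨b, ⟨hbB, ?_⟩, ?_⟩
        · rw [mem_closedBall, dist_comm]
          calc dist p b ≤ dist p a' + dist a' b := dist_triangle _ _ _
            _ ≤ (r - 3 * δ) + 2 * δ := add_le_add ha'r hab.le
            _ ≤ r := by linarith
        · rw [edist_dist]
          apply ENNReal.ofReal_le_ofReal
          calc dist x b ≤ dist x a' + dist a' b := dist_triangle _ _ _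
            _ ≤ ε' + 2 * δ := add_le_add ha'x hab.le
      · -- direction B → A
        rintro y ⟨hyB, hyball⟩
        have hpy : dist p y ≤ r := by rwa [mem_closedBall, dist_comm] at hyball
        obtain ⟨a, haA, hya⟩ := hP1 y hyB (by linarith)
        have hpa : dist p a ≤ r + 2 * δ := by
          calc dist p a ≤ dist p y + dist y a := dist_triangle _ _ _
            _ ≤ r + 2 * δ := by linarith
        have : ¬ (0 < r + 2 * δ ∧ r + 2 * δ ≤ R + 1 ∧ ∃ a'' ∈ A, dist p a'' ≤ r + 2 * δ ∧
            ∀ a' ∈ A, dist p a' ≤ (r + 2 * δ) - 3 * δ → ε' < dist a'' a') := hrg'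
        push_neg at this
        obtain ⟨a', ha'A, ha'r, ha'a⟩ := this (by linarith) (by linarith) a haA hpa
        refine ⟨a', ⟨ha'A, ?_⟩, ?_⟩
        · rw [mem_closedBall, dist_comm]; linarith
        · rw [edist_dist]
          apply ENNReal.ofReal_le_ofReal
          calc dist y a' ≤ dist y a + dist a a' := dist_triangle _ _ _
            _ ≤ δ + ε' := add_le_add hya.le ha'a
            _ ≤ ε' + 2 * δ := by linarith
    calc dR p r A B ≤ (ENNReal.ofReal (ε' + 2 * δ)).toReal := by
          apply ENNReal.toReal_mono ofReal_ne_top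
          exact le_trans (min_le_right _ _) hbound
      _ = ε' + 2 * δ := ENNReal.toReal_ofReal (by linarith)
  -- the bad set is covered by few intervals
  obtain ⟨I, hIcard, hIcov⟩ := bad_cover p A hδpos hε' D hDcov
  have hBadsub : Bad ⊆ ⋃ k ∈ I, Ico (3 * δ * k) (3 * δ * k + 3 * δ) := hIcov
  -- majorant pieces
  have habk : ∀ k : ℕ, 3 * δ * k - 2 * δ ≤ 3 * δ * k + 3 * δ := by
    intro k; linarith
  have hg1int : Integrable (fun r => (ε' + 2 * δ) * Real.exp (-r)) (volume.restrict (Ioi 0)) := by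
    have hfun : (fun r : ℝ => (ε' + 2 * δ) * Real.exp (-r)) =
        fun r => (ε' + 2 * δ) * Real.exp (-1 * r) := by
      funext r; rw [neg_one_mul]
    rw [hfun]
    exact (exp_neg_integrableOn_Ioi 0 one_pos).const_mul _
  have hg2int : Integrable (fun r : ℝ => ∑ k ∈ I,
      (Ico (3 * δ * k - 2 * δ) (3 * δ * k + 3 * δ)).indicator (fun _ => (1:ℝ)) r)
      (volume.restrict (Ioi 0)) :=
    integrable_finset_sum _ (fun k _ => (aux_ind_Ico _ _ (habk k)).1)
  have hg3 := aux_ind_exp hR0 (1:ℝ)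
  have hφint : Integrable (fun r : ℝ => (ε' + 2 * δ) * Real.exp (-r) +
      (∑ k ∈ I, (Ico (3 * δ * k - 2 * δ) (3 * δ * k + 3 * δ)).indicator (fun _ => (1:ℝ)) r) +
      (Ioi R).indicator (fun r => 1 * Real.exp (-r)) r) (volume.restrict (Ioi 0)) :=
    (hg1int.add hg2int).add hg3.1
  have hle : dChab p A B ≤ ∫ r in Ioi 0, ((ε' + 2 * δ) * Real.exp (-r) +
      (∑ k ∈ I, (Ico (3 * δ * k - 2 * δ) (3 * δ * k + 3 * δ)).indicator (fun _ => (1:ℝ)) r) +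
      (Ioi R).indicator (fun r => 1 * Real.exp (-r)) r) := by
    apply integral_mono_of_nonneg
    · filter_upwards with r
      exact mul_nonneg (Real.exp_pos _).le (dR_nonneg p r A B)
    · exact hφint
    · filter_upwards [ae_restrict_mem measurableSet_Ioi] with r hr
      have hr0 : 0 < r := hr
      show Real.exp (-r) * dR p r A B ≤ _
      have n1 : 0 ≤ (ε' + 2 * δ) * Real.exp (-r) :=
        mul_nonneg (by linarith) (Real.exp_pos _).le
      have n2 : (0:ℝ) ≤ ∑ k ∈ I,
          (Ico (3 * δ * k - 2 * δ) (3 * δ * k + 3 * δ)).indicator (fun _ => (1:ℝ)) r :=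
        Finset.sum_nonneg fun k _ => indicator_nonneg (fun _ _ => zero_le_one) _
      have n3 : (0:ℝ) ≤ (Ioi R).indicator (fun r => 1 * Real.exp (-r)) r :=
        indicator_nonneg (fun x _ => by rw [one_mul]; exact (Real.exp_pos _).le) _
      rcases le_or_gt r R with hrR | hrR
      · by_cases hV : ∃ k ∈ I, r ∈ Ico (3 * δ * k - 2 * δ) (3 * δ * k + 3 * δ)
        · obtain ⟨k, hkI, hrk⟩ := hV
          have hker : Real.exp (-r) * dR p r A B ≤ 1 := by
            have e1 : Real.exp (-r) ≤ 1 := Real.exp_le_one_iff.2 (by linarith)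
            calc Real.exp (-r) * dR p r A B ≤ 1 * 1 :=
                mul_le_mul e1 (dR_le_one p r A B) (dR_nonneg p r A B) zero_le_one
              _ = 1 := by ring
          have h2 : (1:ℝ) ≤ ∑ k ∈ I,
              (Ico (3 * δ * k - 2 * δ) (3 * δ * k + 3 * δ)).indicator (fun _ => (1:ℝ)) r := by
            have := Finset.single_le_sum
              (f := fun k : ℕ =>
                (Ico (3 * δ * k - 2 * δ) (3 * δ * k + 3 * δ)).indicator (fun _ => (1:ℝ)) r)
              (fun i _ => indicator_nonneg (fun _ _ => zero_le_one) _) hkI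
            simp only [indicator_of_mem hrk] at this
            exact this
          linarith
        · push_neg at hV
          have hrBad : r ∉ Bad := by
            intro hBad
            obtain ⟨k, hkI, hk⟩ := mem_iUnion₂.1 (hBadsub hBad)
            rw [mem_Ico] at hk
            exact absurd (mem_Ico.2 ⟨by linarith, by linarith⟩) (hV k hkI)
          have hrBad2 : r + 2 * δ ∉ Bad := by
            intro hBad
            obtain ⟨k, hkI, hk⟩ := mem_iUnion₂.1 (hBadsub hBad)
            rw [mem_Ico] at hk
            exact absurd (mem_Ico.2 ⟨by linarith, by linarith⟩) (hV k hkI)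
          have hdRle := hgood r hr0 hrR hrBad hrBad2
          have : Real.exp (-r) * dR p r A B ≤ (ε' + 2 * δ) * Real.exp (-r) := by
            rw [mul_comm (ε' + 2 * δ)]
            exact mul_le_mul_of_nonneg_left hdRle (Real.exp_pos _).le
          linarith
      · have hker : Real.exp (-r) * dR p r A B ≤
            (Ioi R).indicator (fun r => 1 * Real.exp (-r)) r := by
          rw [indicator_of_mem (mem_Ioi.2 hrR), one_mul]
          nth_rewrite 2 [← mul_one (Real.exp (-r))]
          exact mul_le_mul_of_nonneg_left (dR_le_one p r A B) (Real.exp_pos _).le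
        linarith
  have hval : ∫ r in Ioi 0, ((ε' + 2 * δ) * Real.exp (-r) +
      (∑ k ∈ I, (Ico (3 * δ * k - 2 * δ) (3 * δ * k + 3 * δ)).indicator (fun _ => (1:ℝ)) r) +
      (Ioi R).indicator (fun r => 1 * Real.exp (-r)) r) ≤
      (ε' + 2 * δ) + 10 * (N₀:ℝ) * δ + ε / 8 := by
    have hg12 : Integrable (fun r : ℝ => (ε' + 2 * δ) * Real.exp (-r) +
        (∑ k ∈ I, (Ico (3 * δ * k - 2 * δ) (3 * δ * k + 3 * δ)).indicator (fun _ => (1:ℝ)) r))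
        (volume.restrict (Ioi 0)) := hg1int.add hg2int
    have e1 : ∫ r in Ioi 0, ((ε' + 2 * δ) * Real.exp (-r) +
        (∑ k ∈ I, (Ico (3 * δ * k - 2 * δ) (3 * δ * k + 3 * δ)).indicator (fun _ => (1:ℝ)) r) +
        (Ioi R).indicator (fun r => 1 * Real.exp (-r)) r) =
        (∫ r in Ioi 0, ((ε' + 2 * δ) * Real.exp (-r) +
        (∑ k ∈ I, (Ico (3 * δ * k - 2 * δ) (3 * δ * k + 3 * δ)).indicator (fun _ => (1:ℝ)) r))) +
        ∫ r in Ioi 0, (Ioi R).indicator (fun r => 1 * Real.exp (-r)) r :=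
      integral_add hg12 hg3.1
    have e2 : ∫ r in Ioi 0, ((ε' + 2 * δ) * Real.exp (-r) +
        (∑ k ∈ I, (Ico (3 * δ * k - 2 * δ) (3 * δ * k + 3 * δ)).indicator (fun _ => (1:ℝ)) r)) =
        (∫ r in Ioi 0, (ε' + 2 * δ) * Real.exp (-r)) +
        ∫ r in Ioi 0, (∑ k ∈ I, (Ico (3 * δ * k - 2 * δ) (3 * δ * k + 3 * δ)).indicator
          (fun _ => (1:ℝ)) r) :=
      integral_add hg1int hg2int
    rw [e1, e2]
    have v1 : ∫ r in Ioi 0, (ε' + 2 * δ) * Real.exp (-r) = ε' + 2 * δ := by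
      rw [MeasureTheory.integral_const_mul, integral_exp_neg_Ioi_zero, mul_one]
    have v2 : ∫ r in Ioi 0, (∑ k ∈ I,
        (Ico (3 * δ * k - 2 * δ) (3 * δ * k + 3 * δ)).indicator (fun _ => (1:ℝ)) r) ≤
        10 * (N₀:ℝ) * δ := by
      rw [integral_finset_sum _ (fun k _ => (aux_ind_Ico _ _ (habk k)).1)]
      calc ∑ k ∈ I, ∫ r in Ioi 0,
            (Ico (3 * δ * k - 2 * δ) (3 * δ * k + 3 * δ)).indicator (fun _ => (1:ℝ)) r
          ≤ ∑ k ∈ I, ((3 * δ * k + 3 * δ) - (3 * δ * k - 2 * δ)) :=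
            Finset.sum_le_sum (fun k _ => (aux_ind_Ico _ _ (habk k)).2)
        _ = ∑ _k ∈ I, 5 * δ := Finset.sum_congr rfl (fun k _ => by ring)
        _ = (I.card : ℝ) * (5 * δ) := by rw [Finset.sum_const, nsmul_eq_mul]
        _ ≤ ((2 * N₀ : ℕ) : ℝ) * (5 * δ) := by
            apply mul_le_mul_of_nonneg_right _ (by linarith)
            exact_mod_cast hIcard
        _ = 10 * (N₀:ℝ) * δ := by push_cast; ring
    have v3 : ∫ r in Ioi 0, (Ioi R).indicator (fun r => 1 * Real.exp (-r)) r ≤ ε / 8 := by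
      rw [hg3.2, one_mul]
      exact hRexp
    linarith
  have hfinal : (ε' + 2 * δ) + 10 * (N₀:ℝ) * δ + ε / 8 < ε := by
    have h1 : ε' = ε / 8 := hε'def
    have h2 : 10 * (N₀:ℝ) * δ + 2 * δ = (10 * N₀ + 2) * δ := by ring
    linarith
  linarith



end nbhd

/-- The function `d(A,B) = ∫₀^∞ e^{-R} d_R(A,B) dR` is a metric on the space of closed
subsets of a proper metric space `M`, and the topology it induces coincides with the
Chabauty topology. -/
theorem chabauty_metric (M : Type*) [MetricSpace M] [ProperSpace M] (p : M) :
    ∃ m : MetricSpace (ClosedSubsets M),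
      (∀ A B : ClosedSubsets M, @dist _ m.toDist A B = dChab p A.1 B.1) ∧
      m.toUniformSpace.toTopologicalSpace = Chabauty M := by
  classical
  letI : TopologicalSpace (ClosedSubsets M) := Chabauty M
  have heq0 : ∀ A B : ClosedSubsets M, dChab p A.1 B.1 = 0 → A = B := by
    intro A B h
    have hpos : ∀ (C D : ClosedSubsets M), dChab p C.1 D.1 = 0 → C.1 ⊆ D.1 := by
      intro C D hCD
      intro x hx
      by_contra hxD
      obtain ⟨η, hη, hball⟩ := Metric.isOpen_iff.1 D.2.isOpen_compl x hxD
      have hdist : ∀ b ∈ D.1, min 1 η ≤ dist x b := by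
        intro b hb
        by_contra hlt
        push_neg at hlt
        have : b ∈ ball x η := by
          rw [mem_ball, dist_comm]
          exact hlt.trans_le (min_le_right _ _)
        exact hball this hb
      have hlow := dChab_lower p C.2 D.2 hx (le_max_left 0 (dist p x))
        (le_max_right 0 (dist p x)) (lt_min one_pos hη) (min_le_left _ _) hdist
      have : 0 < min 1 η * Real.exp (-(max 0 (dist p x))) :=
        mul_pos (lt_min one_pos hη) (Real.exp_pos _)
      rw [hCD] at hlow
      linarith
    have h1 : A.1 ⊆ B.1 := hpos A B h
    have h2 : B.1 ⊆ A.1 := hpos B A (by rw [dChab_comm]; exact h)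
    exact Subtype.ext (subset_antisymm h1 h2)
  have hH : ∀ s : Set (ClosedSubsets M), IsOpen s ↔
      ∀ A ∈ s, ∃ ε > 0, ∀ B, dChab p A.1 B.1 < ε → B ∈ s := by
    intro s
    constructor
    · intro hs
      have hs' : TopologicalSpace.GenerateOpen
        ({S | ∃ K : Set M, IsCompact K ∧ S = {C : ClosedSubsets M | C.1 ∩ K = ∅}} ∪
         {S | ∃ U : Set M, IsOpen U ∧ S = {C : ClosedSubsets M | (C.1 ∩ U).Nonempty}}) s := hs
      clear hs
      induction hs' with
      | basic t ht =>
        intro A hA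
        rcases ht with htK | htU
        · obtain ⟨K, hK, rfl⟩ := htK
          have hAK : A.1 ∩ K = ∅ := hA
          have hsubc : K ⊆ (A.1)ᶜ := fun x hx hxA =>
            (eq_empty_iff_forall_notMem.1 hAK x) ⟨hxA, hx⟩
          obtain ⟨δ, hδ, hthick⟩ := hK.exists_thickening_subset_open A.2.isOpen_compl hsubc
          obtain ⟨r, hr⟩ := hK.isBounded.subset_closedBall p
          refine ⟨min 1 δ * Real.exp (-(max 0 r)),
            mul_pos (lt_min one_pos hδ) (Real.exp_pos _), ?_⟩
          intro B hB
          show B.1 ∩ K = ∅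
          by_contra hne
          obtain ⟨b, hbB, hbK⟩ := nonempty_iff_ne_empty.2 hne
          have hblow : ∀ a ∈ A.1, min 1 δ ≤ dist b a := by
            intro a ha
            by_contra hlt
            push_neg at hlt
            rw [dist_comm] at hlt
            have : a ∈ thickening δ K := mem_thickening_iff.2
              ⟨b, hbK, hlt.trans_le (min_le_right _ _)⟩
            exact hthick this ha
          have hpb : dist p b ≤ max 0 r := by
            have := hr hbK
            rw [mem_closedBall] at this
            rw [dist_comm]
            exact this.trans (le_max_right _ _)
          have hlow := dChab_lower p B.2 A.2 hbB (le_max_left 0 r) hpb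
            (lt_min one_pos hδ) (min_le_left _ _) hblow
          rw [dChab_comm] at hlow
          linarith
        · obtain ⟨U, hU, rfl⟩ := htU
          obtain ⟨x, hxA, hxU⟩ := hA
          obtain ⟨η, hη, hballU⟩ := Metric.isOpen_iff.1 hU x hxU
          refine ⟨min 1 η * Real.exp (-(max 0 (dist p x))),
            mul_pos (lt_min one_pos hη) (Real.exp_pos _), ?_⟩
          intro B hB
          show (B.1 ∩ U).Nonempty
          by_contra hne
          rw [not_nonempty_iff_eq_empty] at hne
          have hdist : ∀ b ∈ B.1, min 1 η ≤ dist x b := by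
            intro b hb
            by_contra hlt
            push_neg at hlt
            have hbmem : b ∈ ball x η := by
              rw [mem_ball, dist_comm]
              exact hlt.trans_le (min_le_right _ _)
            have hbU : b ∈ U := hballU hbmem
            exact (eq_empty_iff_forall_notMem.1 hne b) ⟨hb, hbU⟩
          have hlow := dChab_lower p A.2 B.2 hxA (le_max_left 0 (dist p x))
            (le_max_right 0 (dist p x)) (lt_min one_pos hη) (min_le_left _ _) hdist
          linarith
      | univ =>
        intro A _
        exact ⟨1, one_pos, fun B _ => mem_univ B⟩
      | inter t₁ t₂ h1 h2 ih1 ih2 =>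
        intro A hA
        obtain ⟨ε₁, hε₁, hs1⟩ := ih1 A hA.1
        obtain ⟨ε₂, hε₂, hs2⟩ := ih2 A hA.2
        exact ⟨min ε₁ ε₂, lt_min hε₁ hε₂, fun B hB =>
          ⟨hs1 B (hB.trans_le (min_le_left _ _)), hs2 B (hB.trans_le (min_le_right _ _))⟩⟩
      | sUnion S hS ih =>
        intro A hA
        obtain ⟨t, htS, hAt⟩ := hA
        obtain ⟨ε, hε, hsub⟩ := ih t htS A hAt
        exact ⟨ε, hε, fun B hB => ⟨t, htS, hsub B hB⟩⟩
    · intro hball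
      have hex : ∀ A : ClosedSubsets M, A ∈ s →
          ∃ N : Set (ClosedSubsets M), IsOpen N ∧ A ∈ N ∧ N ⊆ s := by
        intro A hA
        obtain ⟨ε, hε, hsub⟩ := hball A hA
        obtain ⟨K, F, hKc, hAK, hFA, δ, hδ, hprop⟩ := chab_nbhd p A.2 hε
        refine ⟨{B : ClosedSubsets M | B.1 ∩ K = ∅} ∩
          ⋂ c ∈ F, {B : ClosedSubsets M | (B.1 ∩ ball c δ).Nonempty}, ?_, ?_, ?_⟩
        · apply IsOpen.inter
          · exact TopologicalSpace.GenerateOpen.basic _ (Or.inl ⟨K, hKc, rfl⟩)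
          · apply isOpen_biInter_finset
            intro c _
            exact TopologicalSpace.GenerateOpen.basic _ (Or.inr ⟨ball c δ, isOpen_ball, rfl⟩)
        · refine ⟨hAK, ?_⟩
          apply mem_iInter₂.2
          intro c hc
          exact ⟨c, hFA c hc, mem_ball_self hδ⟩
        · intro B hB
          have hBF : ∀ c ∈ F, (B.1 ∩ ball c δ).Nonempty := mem_iInter₂.1 hB.2
          exact hsub B (hprop B.1 B.2 hB.1 hBF)
      choose N hNopen hNmem hNsub using hex
      have hseq : s = ⋃ (A : ClosedSubsets M) (hA : A ∈ s), N A hA := by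
        apply subset_antisymm
        · intro B hB
          exact mem_iUnion₂.2 ⟨B, hB, hNmem B hB⟩
        · intro B hB
          obtain ⟨A, hA, hBN⟩ := mem_iUnion₂.1 hB
          exact hNsub A hA hBN
      rw [hseq]
      exact isOpen_iUnion (fun A => isOpen_iUnion (fun hA => hNopen A hA))
  refine ⟨MetricSpace.ofDistTopology (fun A B => dChab p A.1 B.1)
    (fun A => dChab_self p) (fun A B => dChab_comm p)
    (fun A B C => dChab_triangle p A.2 B.2 C.2) ?_ heq0, fun A B => rfl, rfl⟩
  exact hH
end

section
/- If a sequence (C_i) in C(M) converges to C ∈ C(M) in the Chabauty topology, then the set of R > 0 for which d_R(C_i, C) does not converge to 0 is countable; in particular, d_R(C_i, C) → 0 for all but countably many R > 0. -/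
open Metric Filter Set Topology

theorem chab_evA {M : Type*} [MetricSpace M] (C : ℕ → ClosedSubsets M) (D : ClosedSubsets M)
    (h : Tendsto C atTop (@nhds _ (Chabauty M) D))
    (U : Set M) (hU : IsOpen U) (hDU : (D.1 ∩ U).Nonempty) :
    ∀ᶠ i in atTop, ((C i).1 ∩ U).Nonempty := by
  have hS : @IsOpen _ (Chabauty M) {E : ClosedSubsets M | (E.1 ∩ U).Nonempty} :=
    TopologicalSpace.isOpen_generateFrom_of_mem (Or.inr ⟨U, hU, rfl⟩)
  exact h (@IsOpen.mem_nhds _ (Chabauty M) _ _ hS hDU)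

theorem chab_evB {M : Type*} [MetricSpace M] (C : ℕ → ClosedSubsets M) (D : ClosedSubsets M)
    (h : Tendsto C atTop (@nhds _ (Chabauty M) D))
    (K : Set M) (hK : IsCompact K) (hDK : D.1 ∩ K = ∅) :
    ∀ᶠ i in atTop, (C i).1 ∩ K = ∅ := by
  have hS : @IsOpen _ (Chabauty M) {E : ClosedSubsets M | E.1 ∩ K = ∅} :=
    TopologicalSpace.isOpen_generateFrom_of_mem (Or.inl ⟨K, hK, rfl⟩)
  exact h (@IsOpen.mem_nhds _ (Chabauty M) _ _ hS hDK)

theorem tendsto_of_good {M : Type*} [MetricSpace M] [ProperSpace M] (p : M)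
    (C : ℕ → ClosedSubsets M) (D : ClosedSubsets M)
    (h : Tendsto C atTop (@nhds _ (Chabauty M) D)) (R : ℝ)
    (hgood : D.1 ∩ closedBall p R ⊆ closure (D.1 ∩ ball p R)) :
    Tendsto (fun i => dR p R (C i).1 D.1) atTop (nhds 0) := by
  rw [Metric.tendsto_atTop]
  intro ε hε
  suffices hev : ∀ᶠ i in atTop, dR p R (C i).1 D.1 < ε by
    obtain ⟨N, hN⟩ := eventually_atTop.1 hev
    refine ⟨N, fun n hn => ?_⟩
    have hnn : (0:ℝ) ≤ dR p R (C n).1 D.1 := ENNReal.toReal_nonneg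
    rw [Real.dist_eq, sub_zero, abs_of_nonneg hnn]
    exact hN n hn
  by_cases hDR : D.1 ∩ closedBall p R = ∅
  · filter_upwards [chab_evB C D h (closedBall p R) (isCompact_closedBall p R) hDR] with i hi
    simp only [dR, hDR, hi, EMetric.hausdorffEdist_self]
    unfold EMetric.hausdorffEdist
    simpa using hε
  · -- D_R nonempty
    replace hDR : (D.1 ∩ closedBall p R).Nonempty := nonempty_iff_ne_empty.2 hDR
    set δ := ε / 2 with hδdef
    have hδ : 0 < δ := by positivity
    -- direction a: points of C_i near D_R, via evB on the compact set K
    set DR := D.1 ∩ closedBall p R with hDRdef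
    have hKa : ∀ᶠ i in atTop, ∀ z ∈ (C i).1 ∩ closedBall p R,
        ∃ x ∈ DR, edist z x ≤ ENNReal.ofReal δ := by
      set K := closedBall p R ∩ {z | δ ≤ Metric.infDist z DR} with hKdef
      have hKc : IsCompact K := by
        refine (isCompact_closedBall p R).inter_right ?_
        exact isClosed_le continuous_const (Metric.continuous_infDist_pt DR)
      have hDK : D.1 ∩ K = ∅ := by
        ext x
        simp only [mem_inter_iff, mem_empty_iff_false, iff_false, hKdef, mem_setOf_eq]
        rintro ⟨hxD, hxB, hxd⟩
        have : Metric.infDist x DR = 0 := Metric.infDist_zero_of_mem ⟨hxD, hxB⟩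
        rw [this] at hxd
        exact absurd hxd (not_le.2 hδ)
      filter_upwards [chab_evB C D h K hKc hDK] with i hi z hz
      have hzK : z ∉ K := fun hzK => by
        have : z ∈ (C i).1 ∩ K := ⟨hz.1, hzK⟩
        rw [hi] at this
        exact this
      have : Metric.infDist z DR < δ := by
        by_contra hcon
        exact hzK ⟨hz.2, le_of_not_gt hcon⟩
      obtain ⟨x, hxDR, hxd⟩ := (Metric.infDist_lt_iff hDR).1 this
      exact ⟨x, hxDR, by rw [edist_dist]; exact ENNReal.ofReal_le_ofReal hxd.le⟩
    -- direction b: points of D_R near C_i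
    have hKb : ∀ᶠ i in atTop, ∀ x ∈ DR, ∃ z ∈ (C i).1 ∩ closedBall p R,
        edist x z ≤ ENNReal.ofReal δ := by
      have hDRc : IsCompact DR := (isCompact_closedBall p R).inter_left D.2
      -- for each x ∈ DR choose a good open set
      have hUx : ∀ x ∈ DR, ∃ U : Set M, IsOpen U ∧ (D.1 ∩ U).Nonempty ∧
          U ⊆ closedBall p R ∧ U ⊆ ball x (δ / 2) := by
        intro x hx
        have hxcl : x ∈ closure (D.1 ∩ ball p R) := hgood hx
        obtain ⟨y, ⟨hyD, hyB⟩, hxy⟩ := Metric.mem_closure_iff.1 hxcl (δ / 4) (by positivity)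
        have hyR : dist p y < R := by rwa [mem_ball'] at hyB
        set ρ := min (δ / 4) (R - dist p y) with hρdef
        have hρ : 0 < ρ := lt_min (by positivity) (by linarith)
        refine ⟨ball y ρ, isOpen_ball, ⟨y, hyD, mem_ball_self hρ⟩, ?_, ?_⟩
        · intro z hz
          rw [mem_ball] at hz
          rw [mem_closedBall']
          calc dist p z ≤ dist p y + dist y z := dist_triangle _ _ _
            _ ≤ dist p y + ρ := by
                have := (dist_comm z y ▸ hz).le
                linarith
            _ ≤ dist p y + (R - dist p y) := by
                have := min_le_right (δ / 4) (R - dist p y)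
                linarith
            _ = R := by ring
        · intro z hz
          rw [mem_ball] at hz ⊢
          have h1 : dist z y < δ / 4 := lt_of_lt_of_le hz (min_le_left _ _)
          calc dist z x ≤ dist z y + dist y x := dist_triangle _ _ _
            _ < δ / 4 + δ / 4 := by
                have := dist_comm x y ▸ hxy
                linarith
            _ = δ / 2 := by ring
      choose! U hUopen hUne hUball hUnear using hUx
      -- cover DR by balls of radius δ/2
      obtain ⟨t, htsub, htfin, htcov⟩ :=
        hDRc.elim_finite_subcover_image (b := DR) (c := fun x => ball x (δ / 2))
          (fun x _ => isOpen_ball)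
          (fun x hx => mem_iUnion₂.2 ⟨x, hx, mem_ball_self (by positivity)⟩)
      have hevAll : ∀ᶠ i in atTop, ∀ x ∈ t, ((C i).1 ∩ U x).Nonempty := by
        rw [eventually_all_finite htfin]
        intro x hx
        exact chab_evA C D h (U x) (hUopen x (htsub hx)) (hUne x (htsub hx))
      filter_upwards [hevAll] with i hi x hx
      obtain ⟨x₀, hx₀t, hxx₀⟩ := mem_iUnion₂.1 (htcov hx)
      obtain ⟨z, hzC, hzU⟩ := hi x₀ hx₀t
      have hx₀DR := htsub hx₀t
      refine ⟨z, ⟨hzC, hUball x₀ hx₀DR hzU⟩, ?_⟩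
      rw [edist_dist]
      apply ENNReal.ofReal_le_ofReal
      have h1 : dist x x₀ < δ / 2 := mem_ball.1 hxx₀
      have h2 : dist z x₀ < δ / 2 := mem_ball.1 (hUnear x₀ hx₀DR hzU)
      calc dist x z ≤ dist x x₀ + dist x₀ z := dist_triangle _ _ _
        _ ≤ δ / 2 + δ / 2 := by
            have := dist_comm z x₀ ▸ h2
            linarith
        _ = δ := by ring
    filter_upwards [hKa, hKb] with i hia hib
    have hbound : EMetric.hausdorffEdist ((C i).1 ∩ closedBall p R) DR ≤ ENNReal.ofReal δ :=
      EMetric.hausdorffEdist_le_of_mem_edist hia hib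
    have : dR p R (C i).1 D.1 ≤ δ := by
      rw [dR]
      have hm : min 1 (EMetric.hausdorffEdist ((C i).1 ∩ closedBall p R)
          (D.1 ∩ closedBall p R)) ≤ ENNReal.ofReal δ :=
        le_trans (min_le_right _ _) hbound
      calc (min 1 (EMetric.hausdorffEdist ((C i).1 ∩ closedBall p R)
          (D.1 ∩ closedBall p R))).toReal
          ≤ (ENNReal.ofReal δ).toReal := ENNReal.toReal_mono ENNReal.ofReal_ne_top hm
        _ = δ := ENNReal.toReal_ofReal hδ.le
    linarith

theorem countable_nongood {M : Type*} [MetricSpace M] [ProperSpace M] (p : M) (D : Set M) :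
    {R : ℝ | 0 < R ∧ ¬ (D ∩ closedBall p R ⊆ closure (D ∩ ball p R))}.Countable := by
  haveI : Nonempty M := ⟨p⟩
  obtain ⟨u, hu⟩ := TopologicalSpace.exists_dense_seq M
  set S := {R : ℝ | 0 < R ∧ ¬ (D ∩ closedBall p R ⊆ closure (D ∩ ball p R))} with hSdef
  -- witness extraction
  have hwit : ∀ R ∈ S, ∃ kq : ℕ × ℚ, 0 < kq.2 ∧ ∃ x ∈ D, dist p x ≤ R ∧
      dist x (u kq.1) < (kq.2 : ℝ) ∧ ∀ y ∈ D, dist p y < R → 2 * (kq.2 : ℝ) < dist x y := by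
    rintro R ⟨hR, hbad⟩
    rw [not_subset] at hbad
    obtain ⟨x, ⟨hxD, hxB⟩, hxcl⟩ := hbad
    rw [Metric.mem_closure_iff] at hxcl
    push_neg at hxcl
    obtain ⟨ε, hε, hsep⟩ := hxcl
    obtain ⟨k, hk⟩ := hu.exists_dist_lt x (show (0:ℝ) < ε / 4 by positivity)
    obtain ⟨q, hq1, hq2⟩ := exists_rat_btwn (show ε / 4 < ε / 2 by linarith)
    refine ⟨(k, q), ?_, x, hxD, ?_, ?_, ?_⟩
    · exact_mod_cast lt_trans (by positivity : (0:ℝ) < ε / 4) hq1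
    · rwa [mem_closedBall'] at hxB
    · exact lt_trans hk hq1
    · intro y hyD hyR
      have hy : y ∈ D ∩ ball p R := ⟨hyD, by rwa [mem_ball']⟩
      have := hsep y hy
      have h2q : 2 * (q : ℝ) < ε := by linarith
      linarith
  choose! F hF1 hF2 using hwit
  have hinj : ∀ R ∈ S, ∀ R' ∈ S, F R = F R' → R < R' → False := by
    intro R hR R' hR' hFF hlt
    obtain ⟨x, hxD, hxR, hxk, hxsep⟩ := hF2 R hR
    obtain ⟨x', hx'D, hx'R, hx'k, hx'sep⟩ := hF2 R' hR'
    rw [hFF] at hxk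
    have hx : dist p x < R' := lt_of_le_of_lt hxR hlt
    have := hx'sep x hxD hx
    have : 2 * ((F R').2 : ℝ) < dist x' x := this
    have htri : dist x' x ≤ dist x' (u (F R').1) + dist (u (F R').1) x :=
      dist_triangle _ _ _
    rw [dist_comm (u (F R').1) x] at htri
    linarith
  have : Countable ↥S := by
    refine @Function.Injective.countable _ _ _ (fun R : S => F R.1) ?_
    rintro ⟨R, hR⟩ ⟨R', hR'⟩ hFF
    simp only at hFF
    rcases lt_trichotomy R R' with hlt | heq | hlt
    · exact absurd (hinj R hR R' hR' hFF hlt) (fun h => h)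
    · exact Subtype.ext heq
    · exact absurd (hinj R' hR' R hR hFF.symm hlt) (fun h => h)
  exact Set.countable_coe_iff.mp this


/-- If `C_i → C` in the Chabauty topology, then the set of `R > 0` for which
`d_R(C_i, C)` does not converge to `0` is countable. -/
theorem countable_bad_radii (M : Type*) [MetricSpace M] [ProperSpace M] (p : M)
    (C : ℕ → ClosedSubsets M) (D : ClosedSubsets M)
    (h : Tendsto C atTop (@nhds _ (Chabauty M) D)) :
    {R : ℝ | 0 < R ∧
      ¬ Tendsto (fun i => dR p R (C i).1 D.1) atTop (nhds 0)}.Countable := by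
  refine (countable_nongood p D.1).mono ?_
  rintro R ⟨hR, hnt⟩
  refine ⟨hR, fun hgood => hnt ?_⟩
  exact tendsto_of_good p C D h R hgood
end

section
/- Suppose (C_i) converges to C in the Chabauty topology on C(M), and suppose R > 0 is such that every point x ∈ C with d(x,p) = R lies in the closure of C ∩ ball(p,R). Then the sets C_i ∩ closedBall(p,R) converge to C ∩ closedBall(p,R) in the Chabauty topology on closed subsets of the compact set closedBall(p,R); equivalently, d_R(C_i, C) → 0. -/
open Metric Filter Set Topology

/-- If `Cᵢ → D` in the Chabauty topology and `U` is open with `D ∩ U ≠ ∅`, then eventually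
`Cᵢ ∩ U ≠ ∅`. -/
lemma chabauty_eventually_meets {M : Type*} [MetricSpace M]
    {C : ℕ → ClosedSubsets M} {D : ClosedSubsets M}
    (h : Tendsto C atTop (@nhds _ (Chabauty M) D)) {U : Set M} (hU : IsOpen U)
    (hD : (D.1 ∩ U).Nonempty) : ∀ᶠ i in atTop, ((C i).1 ∩ U).Nonempty := by
  letI := Chabauty M
  have hopen : IsOpen {E : ClosedSubsets M | (E.1 ∩ U).Nonempty} :=
    TopologicalSpace.isOpen_generateFrom_of_mem (Or.inr ⟨U, hU, rfl⟩)
  exact h.eventually (hopen.mem_nhds hD)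

/-- If `Cᵢ → D` in the Chabauty topology and `K` is compact with `D ∩ K = ∅`, then eventually
`Cᵢ ∩ K = ∅`. -/
lemma chabauty_eventually_misses {M : Type*} [MetricSpace M]
    {C : ℕ → ClosedSubsets M} {D : ClosedSubsets M}
    (h : Tendsto C atTop (@nhds _ (Chabauty M) D)) {K : Set M} (hK : IsCompact K)
    (hD : D.1 ∩ K = ∅) : ∀ᶠ i in atTop, (C i).1 ∩ K = ∅ := by
  letI := Chabauty M
  have hopen : IsOpen {E : ClosedSubsets M | E.1 ∩ K = ∅} :=
    TopologicalSpace.isOpen_generateFrom_of_mem (Or.inl ⟨K, hK, rfl⟩)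
  exact h.eventually (hopen.mem_nhds hD)

/-- In a proper space, points of a closed set `D` slightly outside `closedBall p R` are close
to `D ∩ closedBall p R`. -/
lemma shrink_annulus {M : Type*} [MetricSpace M] [ProperSpace M] (p : M) (R : ℝ)
    {D : Set M} (hD : IsClosed D) {ε : ℝ} (hε : 0 < ε) :
    ∃ δ > 0, D ∩ closedBall p (R + δ) ⊆ thickening ε (D ∩ closedBall p R) := by
  by_contra hcon
  push_neg at hcon
  set T : Set M := thickening ε (D ∩ closedBall p R) with hT
  set K : ℕ → Set M := fun n => (D ∩ closedBall p (R + 1 / (n + 1))) \ T with hKdef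
  have hclosed : ∀ n, IsClosed (K n) := fun n =>
    ((hD.inter isClosed_closedBall).sdiff isOpen_thickening)
  have hcompact : ∀ n, IsCompact (K n) := fun n =>
    (isCompact_closedBall p (R + 1 / (n + 1))).of_isClosed_subset (hclosed n)
      (fun x hx => hx.1.2)
  have hne : ∀ n : ℕ, (K n).Nonempty := by
    intro n
    have hpos : (0:ℝ) < 1 / (n + 1) := by positivity
    obtain ⟨x, hx, hxT⟩ := not_subset.1 (hcon (1 / (n + 1)) hpos)
    exact ⟨x, hx, hxT⟩
  have hanti : Antitone K := by
    intro m n hmn x hx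
    refine ⟨⟨hx.1.1, ?_⟩, hx.2⟩
    have h1 : (1:ℝ) / (n + 1) ≤ 1 / (m + 1) := by
      apply one_div_le_one_div_of_le (by positivity)
      exact_mod_cast Nat.add_le_add_right hmn 1
    exact (mem_closedBall.1 hx.1.2).trans (by linarith)
  obtain ⟨x, hx⟩ := IsCompact.nonempty_iInter_of_directed_nonempty_isCompact_isClosed
    K hanti.directed_ge hne hcompact hclosed
  have hxD : x ∈ D := (mem_iInter.1 hx 0).1.1
  have hxT : x ∉ T := (mem_iInter.1 hx 0).2
  have hxR : dist x p ≤ R := by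
    refine le_of_forall_pos_le_add (fun η hη => ?_)
    obtain ⟨n, hn⟩ := exists_nat_one_div_lt hη
    have := (mem_iInter.1 hx n).1.2
    rw [mem_closedBall] at this
    push_cast at this hn ⊢
    linarith
  exact hxT (self_subset_thickening hε _ ⟨hxD, mem_closedBall.2 hxR⟩)

/-- Suppose `C_i → C` in the Chabauty topology and `R > 0` is such that every `x ∈ C` with
`d(x,p) = R` lies in the closure of `C ∩ ball p R`. Then `C_i ∩ closedBall p R` converges
to `C ∩ closedBall p R` in the Hausdorff sense, i.e. `d_R(C_i, C) → 0`. -/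
theorem dR_tendsto_of_chabauty (M : Type*) [MetricSpace M] [ProperSpace M] (p : M)
    (C : ℕ → ClosedSubsets M) (D : ClosedSubsets M)
    (h : Tendsto C atTop (@nhds _ (Chabauty M) D))
    (R : ℝ) (hR : 0 < R)
    (hgood : ∀ x ∈ D.1, dist x p = R → x ∈ closure (D.1 ∩ ball p R)) :
    Tendsto (fun i => dR p R (C i).1 D.1) atTop (nhds 0) := by
  rw [NormedAddCommGroup.tendsto_nhds_zero]
  intro ε hε
  set ε2 : ℝ := ε / 4 with hε2def
  have hε2 : 0 < ε2 := by positivity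
  set S : Set M := D.1 ∩ closedBall p R with hSdef
  have hScompact : IsCompact S :=
    (isCompact_closedBall p R).of_isClosed_subset (D.2.inter isClosed_closedBall)
      (fun x hx => hx.2)
  -- every point of S is in the closure of D ∩ ball p R
  have hScl : S ⊆ closure (D.1 ∩ ball p R) := by
    intro x hx
    rcases lt_or_eq_of_le (mem_closedBall.1 hx.2) with hlt | heq
    · exact subset_closure ⟨hx.1, mem_ball.2 hlt⟩
    · exact hgood x hx.1 heq
  -- Direction 1: finite cover of S by balls centered in D ∩ ball p R
  have hcover : S ⊆ ⋃ y : ↥(D.1 ∩ ball p R), ball (y : M) ε2 := by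
    intro x hx
    obtain ⟨y, hyD, hyd⟩ := Metric.mem_closure_iff.1 (hScl hx) ε2 hε2
    exact mem_iUnion.2 ⟨⟨y, hyD⟩, mem_ball.2 hyd⟩
  obtain ⟨t, ht⟩ := hScompact.elim_finite_subcover
    (fun y : ↥(D.1 ∩ ball p R) => ball (y : M) ε2) (fun y => isOpen_ball) hcover
  have hdir1 : ∀ᶠ i in atTop, ∀ y ∈ t, ((C i).1 ∩ (ball (y : M) ε2 ∩ ball p R)).Nonempty := by
    rw [eventually_all_finset t]
    intro y _
    refine chabauty_eventually_meets h (isOpen_ball.inter isOpen_ball) ?_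
    exact ⟨(y : M), y.2.1, mem_ball_self hε2, y.2.2⟩
  -- Direction 2: eventually Cᵢ misses K = closedBall p R \ thickening δ D
  obtain ⟨δ0, hδ0, hδ0sub⟩ := shrink_annulus p R D.2 hε2
  set δ : ℝ := min δ0 ε2 with hδdef
  have hδpos : 0 < δ := lt_min hδ0 hε2
  set K : Set M := closedBall p R \ thickening δ D.1 with hKdef
  have hKcompact : IsCompact K :=
    (isCompact_closedBall p R).of_isClosed_subset
      (isClosed_closedBall.sdiff isOpen_thickening) (fun x hx => hx.1)
  have hDK : D.1 ∩ K = ∅ := by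
    ext x
    simp only [mem_inter_iff, mem_empty_iff_false, iff_false, not_and, hKdef, mem_diff,
      not_and, not_not]
    exact fun hxD _ => self_subset_thickening hδpos _ hxD
  have hdir2 := chabauty_eventually_misses h hKcompact hDK
  filter_upwards [hdir1, hdir2] with i h1 h2
  -- bound hausdorffEdist by ofReal (ε/2)
  have hbound : EMetric.hausdorffEdist ((C i).1 ∩ closedBall p R) S ≤ ENNReal.ofReal (ε / 2) := by
    apply EMetric.hausdorffEdist_le_of_mem_edist
    · -- each point of Cᵢ ∩ cB is close to S
      intro x hx
      have hxK : x ∉ K := fun hK' => by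
        have : x ∈ (C i).1 ∩ K := ⟨hx.1, hK'⟩
        rw [h2] at this; exact this
      have hxth : x ∈ thickening δ D.1 := by
        by_contra hcon
        exact hxK ⟨hx.2, hcon⟩
      obtain ⟨y, hyD, hxy⟩ := mem_thickening_iff.1 hxth
      have hyball : y ∈ D.1 ∩ closedBall p (R + δ0) := by
        refine ⟨hyD, mem_closedBall.2 ?_⟩
        have : dist y p ≤ dist y x + dist x p := dist_triangle y x p
        have hxp : dist x p ≤ R := mem_closedBall.1 hx.2
        have hδle : δ ≤ δ0 := min_le_left _ _
        rw [dist_comm y x] at this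
        linarith
      obtain ⟨z, hzS, hyz⟩ := mem_thickening_iff.1 (hδ0sub hyball)
      refine ⟨z, hzS, ?_⟩
      rw [edist_dist]
      apply ENNReal.ofReal_le_ofReal
      have : dist x z ≤ dist x y + dist y z := dist_triangle x y z
      have hδle : δ ≤ ε2 := min_le_right _ _
      rw [hε2def] at *
      linarith
    · -- each point of S is close to Cᵢ ∩ cB
      intro x hx
      obtain ⟨y, hyt', hxy⟩ := mem_iUnion₂.1 (ht hx)
      obtain ⟨z, hzC, hzy, hzp⟩ := h1 y hyt'
      refine ⟨z, ⟨hzC, ball_subset_closedBall hzp⟩, ?_⟩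
      rw [edist_dist]
      apply ENNReal.ofReal_le_ofReal
      have h3 := dist_triangle x (y : M) z
      have h1' : dist x (y : M) < ε2 := mem_ball.1 hxy
      have h2' : dist (y : M) z < ε2 := mem_ball'.1 hzy
      rw [hε2def] at *
      linarith
  have hnn : 0 ≤ dR p R (C i).1 D.1 := ENNReal.toReal_nonneg
  rw [Real.norm_eq_abs, abs_of_nonneg hnn]
  have hle : dR p R (C i).1 D.1 ≤ ε / 2 := by
    rw [dR]
    calc (min 1 (EMetric.hausdorffEdist ((C i).1 ∩ closedBall p R)
            (D.1 ∩ closedBall p R))).toReal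
        ≤ (ENNReal.ofReal (ε / 2)).toReal := by
          apply ENNReal.toReal_mono ENNReal.ofReal_ne_top
          exact le_trans (min_le_right _ _) hbound
      _ = ε / 2 := ENNReal.toReal_ofReal (by positivity)
  linarith
end

section
/- Let C ⊂ M be closed and let L = {x ∈ C : x is not in the closure of C ∩ ball(p, d(p,x))}. Then the set of real numbers {d(x,p) : x ∈ L} is countable. -/
open Metric Filter Set Topology

/-- For a closed set `C` in a proper metric space with basepoint `p`, let
`L = {x ∈ C | x ∉ closure (C ∩ ball p (d p x))}`. Then `{d(x,p) | x ∈ L}` is countable. -/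
theorem countable_dist_of_isolated_radii (M : Type*) [MetricSpace M] [ProperSpace M]
    (p : M) (C : Set M) (hC : IsClosed C) :
    ((fun x => dist x p) ''
      {x | x ∈ C ∧ x ∉ closure (C ∩ ball p (dist p x))}).Countable := by
  set L := {x | x ∈ C ∧ x ∉ closure (C ∩ ball p (dist p x))} with hLdef
  -- For each positive rational q, the set of points of L whose q-ball is disjoint from
  -- C ∩ ball p (dist p x)
  set S : ℚ → Set M :=
    fun q => {x ∈ L | Disjoint (ball x (q : ℝ)) (C ∩ ball p (dist p x))} with hSdef
  -- each S q has a countable image under dist to p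
  have main : ∀ q : ℚ, 0 < (q : ℝ) → ((fun x => dist x p) '' S q).Countable := by
    intro q hq
    obtain ⟨D, Dcount, Ddense⟩ := TopologicalSpace.exists_countable_dense (S q)
    have hsub : (fun x => dist x p) '' S q ⊆
        (fun x => dist x p) '' (Subtype.val '' D) := by
      rintro _ ⟨x, hxS, rfl⟩
      obtain ⟨⟨d, hdS⟩, hdD, hdist⟩ := Ddense.exists_dist_lt (⟨x, hxS⟩ : S q) hq
      refine ⟨d, ⟨⟨d, hdS⟩, hdD, rfl⟩, ?_⟩
      have hdx : dist x d < (q : ℝ) := by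
        simpa [Subtype.dist_eq] using hdist
      -- show dist d p = dist x p
      by_contra hne
      have hne' : dist d p ≠ dist x p := hne
      rcases lt_or_gt_of_ne hne' with h | h
      · -- dist d p < dist x p : d contradicts disjointness at x
        have hd1 : d ∈ ball x (q : ℝ) := by
          simpa [mem_ball, dist_comm] using hdx
        have hd2 : d ∈ C ∩ ball p (dist p x) := by
          refine ⟨hdS.1.1, ?_⟩
          simp only [mem_ball]
          rw [dist_comm p x]
          exact h
        exact Set.disjoint_left.mp hxS.2 hd1 hd2
      · -- dist x p < dist d p : x contradicts disjointness at d
        have hd1 : x ∈ ball d (q : ℝ) := by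
          simpa [mem_ball, dist_comm] using hdx
        have hd2 : x ∈ C ∩ ball p (dist p d) := by
          refine ⟨hxS.1.1, ?_⟩
          simp only [mem_ball]
          rw [dist_comm p d]
          exact h
        exact Set.disjoint_left.mp hdS.2 hd1 hd2
    exact ((Dcount.image _).image _).mono hsub
  -- L is covered by the S q
  have hcover : L ⊆ ⋃ q : {q : ℚ // 0 < q}, S q := by
    intro x hx
    have hx' : x ∉ closure (C ∩ ball p (dist p x)) := hx.2
    rw [Metric.mem_closure_iff] at hx'
    push_neg at hx'
    obtain ⟨ε, hε, hball⟩ := hx'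
    obtain ⟨q, hq0, hqε⟩ := exists_rat_btwn hε
    refine Set.mem_iUnion.2 ⟨⟨q, by exact_mod_cast hq0⟩, hx, ?_⟩
    rw [Set.disjoint_left]
    intro y hy hyC
    exact absurd (mem_ball'.mp hy) (not_lt.2 (hqε.le.trans (hball y hyC)))
  have himg : (fun x => dist x p) '' L ⊆
      ⋃ q : {q : ℚ // 0 < q}, (fun x => dist x p) '' S q := by
    rw [← Set.image_iUnion]
    exact Set.image_mono hcover
  exact (Set.countable_iUnion fun q : {q : ℚ // 0 < q} =>
    main q.1 (by exact_mod_cast q.2)).mono himg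
end

section
/- Let C ⊂ M be closed, let K ⊂ M be compact, and let ε₀ > 0. Then the set of real numbers {d(p,x) : x ∈ C ∩ K and C ∩ ball(p, d(p,x)) ∩ ball(x, ε₀) = ∅} is finite. -/
open Metric Filter Set Topology

/-- For a closed set `C`, a compact set `K`, and `ε₀ > 0` in a proper metric space with
basepoint `p`, the set of values `d(p,x)` for `x ∈ C ∩ K` with
`C ∩ ball p (d p x) ∩ ball x ε₀ = ∅` is finite. -/
theorem finite_dist_of_isolated_radii (M : Type*) [MetricSpace M] [ProperSpace M]
    (p : M) (C : Set M) (hC : IsClosed C) (K : Set M) (hK : IsCompact K)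
    (ε₀ : ℝ) (hε₀ : 0 < ε₀) :
    ((fun x => dist p x) ''
      {x | x ∈ C ∩ K ∧ C ∩ ball p (dist p x) ∩ ball x ε₀ = ∅}).Finite := by
  set A := {x | x ∈ C ∩ K ∧ C ∩ ball p (dist p x) ∩ ball x ε₀ = ∅} with hA
  by_contra h
  haveI : Nonempty M := ⟨p⟩
  have hS : ((fun x => dist p x) '' A).Infinite := h
  have hchoice : ∀ s ∈ (fun x => dist p x) '' A, ∃ x, x ∈ A ∧ dist p x = s := by
    intro s hs
    obtain ⟨x, hx, hxs⟩ := hs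
    exact ⟨x, hx, hxs⟩
  choose! f hfA hfd using hchoice
  obtain ⟨t, htfin, htsub⟩ :=
    (Metric.totallyBounded_iff.mp hK.totallyBounded) (ε₀ / 2) (by linarith)
  have hcenter : ∀ s ∈ (fun x => dist p x) '' A, ∃ y, y ∈ t ∧ f s ∈ ball y (ε₀ / 2) := by
    intro s hs
    have hfK : f s ∈ K := (hfA s hs).1.2
    have := htsub hfK
    simp only [Set.mem_iUnion] at this
    obtain ⟨y, hy, hby⟩ := this
    exact ⟨y, hy, hby⟩
  choose! g hgt hgb using hcenter
  obtain ⟨s, hs, s', hs', hne, heq⟩ :=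
    hS.exists_ne_map_eq_of_mapsTo (f := g) (fun s hs => hgt s hs) htfin
  have hdist : dist (f s) (f s') < ε₀ := by
    have h1 : dist (f s) (g s) < ε₀ / 2 := mem_ball.mp (hgb s hs)
    have h2 : dist (f s') (g s') < ε₀ / 2 := mem_ball.mp (hgb s' hs')
    calc dist (f s) (f s') ≤ dist (f s) (g s) + dist (g s) (f s') := dist_triangle _ _ _
      _ = dist (f s) (g s) + dist (f s') (g s') := by rw [heq, dist_comm (g s') (f s')]
      _ < ε₀ / 2 + ε₀ / 2 := by linarith
      _ = ε₀ := by ring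
  -- wlog s < s'
  have key : ∀ a b, a ∈ (fun x => dist p x) '' A → b ∈ (fun x => dist p x) '' A →
      a < b → dist (f a) (f b) < ε₀ → False := by
    intro a b ha hb hab hd
    have hbA := hfA b hb
    have haA := hfA a ha
    have : f a ∈ C ∩ ball p (dist p (f b)) ∩ ball (f b) ε₀ := by
      refine ⟨⟨haA.1.1, ?_⟩, ?_⟩
      · rw [mem_ball, dist_comm, hfd a ha, hfd b hb]; exact hab
      · rw [mem_ball]; exact hd
    rw [hbA.2] at this
    exact this
  rcases lt_or_gt_of_ne hne with hlt | hgt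
  · exact key s s' hs hs' hlt hdist
  · exact key s' s hs' hs hgt (by rwa [dist_comm])
end

section
/- Suppose x_i → x is a convergent sequence of points in M with d(x,p) = R and d(x_i,p) > R for all i. Then the singletons {x_i} converge to the singleton {x} in the Chabauty topology on C(M), while d_R({x_i}, {x}) = 1 for all i; in particular the family of pseudo-metrics {d_R : R > 0} does not determine the Chabauty topology. -/
open Metric Filter Set Topology

/-- If `x_i → x` with `d(x,p) = R` and `d(x_i,p) > R` for all `i`, then the singletons
`{x_i}` converge to `{x}` in the Chabauty topology, while `d_R({x_i},{x}) = 1` for all `i`;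
so the family of pseudo-metrics `{d_R | R > 0}` does not determine the Chabauty topology. -/
theorem singletons_chabauty_but_not_dR (M : Type*) [MetricSpace M] [ProperSpace M] (p : M)
    (R : ℝ) (hR : 0 < R) (x : ℕ → M) (y : M)
    (hconv : Tendsto x atTop (nhds y)) (hy : dist y p = R)
    (hx : ∀ i, R < dist (x i) p) :
    Tendsto (fun i => (⟨{x i}, isClosed_singleton⟩ : ClosedSubsets M)) atTop
      (@nhds _ (Chabauty M) ⟨{y}, isClosed_singleton⟩) ∧
    ∀ i, dR p R {x i} {y} = 1 := by
  constructor
  · rw [Chabauty, TopologicalSpace.tendsto_nhds_generateFrom_iff]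
    rintro S (⟨K, hK, rfl⟩ | ⟨U, hU, rfl⟩)
    · intro hyS
      simp only [mem_setOf_eq, singleton_inter_eq_empty] at hyS
      filter_upwards [hconv (hK.isClosed.isOpen_compl.mem_nhds hyS)] with i hi
      simpa [singleton_inter_eq_empty] using hi
    · intro hyS
      simp only [mem_setOf_eq, singleton_inter_nonempty] at hyS
      filter_upwards [hconv (hU.mem_nhds hyS)] with i hi
      simpa [singleton_inter_nonempty] using hi
  · intro i
    have h1 : ({x i} : Set M) ∩ closedBall p R = ∅ := by
      rw [singleton_inter_eq_empty, mem_closedBall, not_le]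
      exact hx i
    have h2 : ({y} : Set M) ∩ closedBall p R = {y} := by
      rw [inter_eq_left, singleton_subset_iff, mem_closedBall]
      exact le_of_eq hy
    rw [dR, h1, h2, EMetric.hausdorffEdist, Metric.hausdorffEDist_comm,
      Metric.hausdorffEDist_empty (singleton_nonempty y)]
    simp
end
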